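/- In a free group on two generators ξ, η, for each k ≥ 2 the number of pairs (γ, ψ) with ψ a reduced word of length exactly k, γ a nontrivial reduced word of length at most k, and such that the product γψ reduces to a word of length at most k, equals 4·3^{k-1}·r_k, where r_k = 1 + Σ_{i=1}^{k-1}(1 + 2·Σ_{j=1}^{min{i,k-i}} 3^{j-1}). -/

import Mathlib

open List FreeGroup Finset

namespace CountRelAux

abbrev L2 := Fin 2 × Bool

def R (p q : L2) : Prop := ¬(p.1 = q.1 ∧ p.2 = !q.2)

instance : DecidableRel R := fun p q => by unfold R; exact inferInstance

def IsRed (l : List L2) : Prop := l.IsChain R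

lemma reduce_eq_self {l : List L2} (h : IsRed l) : FreeGroup.reduce l = l := by
  induction l with
  | nil => rfl
  | cons a t ih =>
    have ht : IsRed t := h.tail
    rw [FreeGroup.reduce.cons, ih ht]
    cases t with
    | nil => rfl
    | cons b t' =>
      have hR : R a b := (List.isChain_cons_cons.mp h).1
      simp only [R] at hR
      simp [hR]

lemma not_chain'_decomp {α : Type*} {S : α → α → Prop} :
    ∀ {l : List α}, ¬ l.IsChain S → ∃ l₁ x y l₂, l = l₁ ++ x :: y :: l₂ ∧ ¬ S x y
  | [], h => absurd List.isChain_nil h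
  | [x], h => absurd (List.isChain_singleton x) h
  | x :: y :: t, h => by
    rw [List.isChain_cons_cons] at h
    by_cases hS : S x y
    · have h2 : ¬ (y :: t).IsChain S := fun hc => h ⟨hS, hc⟩
      obtain ⟨l₁, a, b, l₂, heq, hab⟩ := not_chain'_decomp h2
      exact ⟨x :: l₁, a, b, l₂, by rw [heq]; rfl, hab⟩
    · exact ⟨[], x, y, t, rfl, hS⟩

lemma isRed_reduce (l : List L2) : IsRed (FreeGroup.reduce l) := by
  by_contra h
  obtain ⟨l₁, x, y, l₂, heq, hxy⟩ := not_chain'_decomp h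
  rw [R, not_not] at hxy
  have hy : y = (x.1, !x.2) := by
    obtain ⟨h1, h2⟩ := hxy
    cases x; cases y; simp_all
  exact FreeGroup.reduce.not (L₁ := l) (L₂ := l₁) (L₃ := l₂) (x := x.1) (b := x.2)
    (by rw [heq, hy])

lemma isRed_toWord (x : FreeGroup (Fin 2)) : IsRed x.toWord :=
  x.reduce_toWord ▸ isRed_reduce x.toWord

lemma norm_mk_isRed {v : List L2} (h : IsRed v) : FreeGroup.norm (FreeGroup.mk v) = v.length := by
  rw [FreeGroup.norm, FreeGroup.toWord_mk, reduce_eq_self h]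

lemma isRed_invRev {v : List L2} (h : IsRed v) : IsRed (FreeGroup.invRev v) := by
  have h2 := FreeGroup.reduce_invRev (w := v)
  rw [reduce_eq_self h] at h2
  exact h2 ▸ isRed_reduce _

lemma prod_eq (u w : List L2) (c : ℕ) (h : u.drop (u.length - c) = FreeGroup.invRev (w.take c)) :
    FreeGroup.mk u * FreeGroup.mk w
      = FreeGroup.mk (u.take (u.length - c) ++ w.drop c) := by
  calc FreeGroup.mk u * FreeGroup.mk w
      = FreeGroup.mk (u.take (u.length - c) ++ u.drop (u.length - c)) *
        FreeGroup.mk (w.take c ++ w.drop c) := by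
        rw [List.take_append_drop, List.take_append_drop]
    _ = FreeGroup.mk (u.take (u.length - c)) * ((FreeGroup.mk (w.take c))⁻¹ *
        (FreeGroup.mk (w.take c) * FreeGroup.mk (w.drop c))) := by
        rw [← FreeGroup.mul_mk, ← FreeGroup.mul_mk, h, ← FreeGroup.inv_mk]
        group
    _ = FreeGroup.mk (u.take (u.length - c) ++ w.drop c) := by
        rw [inv_mul_cancel_left, FreeGroup.mul_mk]


lemma invRev_append_singleton (l : List L2) (a : L2) :
    FreeGroup.invRev (l ++ [a]) = (a.1, !a.2) :: FreeGroup.invRev l := by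
  simp [FreeGroup.invRev]

lemma norm_mul_le_iff {u w : List L2} (hu : IsRed u) (hw : IsRed w)
    (hm1 : 1 ≤ u.length) (hmk : u.length ≤ w.length) :
    FreeGroup.norm (FreeGroup.mk u * FreeGroup.mk w) ≤ w.length ↔
      u.drop (u.length / 2) = FreeGroup.invRev (w.take (u.length - u.length / 2)) := by
  constructor
  · intro hnorm
    by_contra hne
    set P : ℕ → Prop := fun j => u.drop (u.length - j) = FreeGroup.invRev (w.take j) with hP
    have hP0 : P 0 := by simp [hP, List.drop_length]
    set c := Nat.findGreatest P (u.length - u.length / 2) with hc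
    have hPc : P c := Nat.findGreatest_spec (Nat.zero_le _) hP0
    have hcs : c ≤ u.length - u.length / 2 := Nat.findGreatest_le _
    have hclt : c < u.length - u.length / 2 := by
      rcases lt_or_eq_of_le hcs with h | h
      · exact h
      · refine absurd ?_ hne
        have := hPc
        rw [hP] at this
        simpa [h, show u.length - (u.length - u.length / 2) = u.length / 2 by omega] using this
    have hnot : ¬ P (c + 1) :=
      Nat.findGreatest_is_greatest (Nat.lt_succ_self c) (by omega)
    clear hc
    clear_value c
    have hck : c < w.length := by omega
    have hcm : c < u.length := by omega
    have h1 : u.length - (c + 1) < u.length := by omega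
    have hx : u.drop (u.length - (c + 1)) = u[u.length - (c + 1)] :: u.drop (u.length - c) := by
      rw [List.drop_eq_getElem_cons h1,
        show u.length - (c + 1) + 1 = u.length - c from by omega]
    have htk : w.take (c + 1) = w.take c ++ [w[c]] := by
      rw [List.take_succ, List.getElem?_eq_getElem hck]
      rfl
    have hy : FreeGroup.invRev (w.take (c + 1))
        = (w[c].1, !w[c].2) :: FreeGroup.invRev (w.take c) := by
      rw [htk, invRev_append_singleton]
    have hmm : u[u.length - (c + 1)] :: u.drop (u.length - c)
        ≠ (w[c].1, !w[c].2) :: FreeGroup.invRev (w.take c) := by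
      rw [← hx, ← hy]; exact hnot
    have hne2 : u[u.length - (c + 1)] ≠ (w[c].1, !w[c].2) := fun h => hmm (by rw [h, hPc])
    have hred2 : IsRed (u.take (u.length - c) ++ w.drop c) := by
      rw [IsRed, List.isChain_append]
      refine ⟨hu.take _, hw.drop _, ?_⟩
      intro p hp q hq
      have hlast : (u.take (u.length - c)).getLast? = some u[u.length - (c + 1)] := by
        rw [List.getLast?_eq_getElem?]
        have hlen : (u.take (u.length - c)).length = u.length - c := by
          rw [List.length_take]; omega
        rw [hlen, show u.length - c - 1 = u.length - (c + 1) by omega,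
          List.getElem?_take_of_lt (by omega), List.getElem?_eq_getElem h1]
      have hhead : (w.drop c).head? = some w[c] := by
        rw [List.head?_drop, List.getElem?_eq_getElem hck]
      rw [hlast, Option.mem_some_iff] at hp
      rw [hhead, Option.mem_some_iff] at hq
      subst hp hq
      rintro ⟨e1, e2⟩
      exact hne2 (Prod.ext e1 e2)
    have heq := prod_eq u w c hPc
    rw [heq, norm_mk_isRed hred2] at hnorm
    rw [List.length_append, List.length_take, List.length_drop] at hnorm
    omega
  · intro hsuf
    have heq := prod_eq u w (u.length - u.length / 2) (by
      rw [show u.length - (u.length - u.length / 2) = u.length / 2 by omega]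
      exact hsuf)
    rw [heq]
    calc FreeGroup.norm (FreeGroup.mk
          (u.take (u.length - (u.length - u.length / 2)) ++ w.drop (u.length - u.length / 2)))
        ≤ _ := FreeGroup.norm_mk_le
      _ ≤ w.length := by
          rw [List.length_append, List.length_take, List.length_drop]
          omega


def ext (v : List L2) : ℕ → Finset (List L2)
  | 0 => {v}
  | t + 1 => (ext v t).biUnion fun u =>
      (Finset.univ.filter fun x : L2 => (x :: u).IsChain R).image fun x => x :: u

lemma mem_ext {v : List L2} (hv : IsRed v) :
    ∀ t u, u ∈ ext v t ↔ IsRed u ∧ u.length = v.length + t ∧ u.drop t = v := by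
  intro t
  induction t with
  | zero =>
    intro u
    simp only [ext, Finset.mem_singleton]
    constructor
    · rintro rfl; exact ⟨hv, by simp, by simp⟩
    · rintro ⟨_, _, hdrop⟩; simpa using hdrop
  | succ t ih =>
    intro u
    simp only [ext, Finset.mem_biUnion, Finset.mem_image, Finset.mem_filter, Finset.mem_univ,
      true_and]
    constructor
    · rintro ⟨u', hu', x, hch, rfl⟩
      obtain ⟨hred, hlen, hdrop⟩ := (ih u').mp hu'
      exact ⟨hch, by simp [hlen]; omega, by simpa using hdrop⟩
    · rintro ⟨hred, hlen, hdrop⟩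
      cases u with
      | nil => simp at hlen
      | cons x u' =>
        refine ⟨u', (ih u').mpr ⟨hred.tail, by simp at hlen; omega, by simpa using hdrop⟩,
          x, hred, rfl⟩

lemma card_ext {v : List L2} (hv : IsRed v) (hne : v ≠ []) :
    ∀ t, (ext v t).card = 3 ^ t := by
  intro t
  induction t with
  | zero => simp [ext]
  | succ t ih =>
    rw [ext, Finset.card_biUnion]
    · have hconst : ∀ u ∈ ext v t,
          ((Finset.univ.filter fun x : L2 => (x :: u).IsChain R).image fun x => x :: u).card
            = 3 := by
        intro u hu
        obtain ⟨hred, hlen, hdrop⟩ := (mem_ext hv t u).mp hu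
        cases u with
        | nil =>
          exfalso
          have : v = [] := by simpa using hdrop.symm
          exact hne this
        | cons h tu =>
          rw [Finset.card_image_of_injective _ (fun (a b : L2) (hab : a :: h :: tu = b :: h :: tu) => by injection hab)]
          have hfe : (Finset.univ.filter fun x : L2 => (x :: h :: tu).IsChain R)
              = Finset.univ.filter fun x : L2 => x ≠ (h.1, !h.2) := by
            apply Finset.filter_congr
            intro x _
            rw [List.isChain_cons_cons]
            constructor
            · rintro ⟨hR, _⟩ rfl
              exact hR ⟨rfl, rfl⟩
            · intro hxne
              refine ⟨fun hands => hxne (Prod.ext hands.1 hands.2), hred⟩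
          rw [hfe, Finset.filter_ne', Finset.card_erase_of_mem (Finset.mem_univ _)]
          simp
      rw [Finset.sum_congr rfl hconst, Finset.sum_const, ih]
      simp [pow_succ, mul_comm]
    · intro a ha b hb hab
      rw [Function.onFun, Finset.disjoint_left]
      rintro y hy hy'
      simp only [Finset.mem_image, Finset.mem_filter] at hy hy'
      obtain ⟨x, _, rfl⟩ := hy
      obtain ⟨x', _, heq⟩ := hy'
      injection heq with h1 h2
      exact hab h2.symm


def WkFin (k : ℕ) : Finset (List L2) := Finset.univ.biUnion fun a : L2 => ext [a] (k - 1)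

lemma isRed_singleton (a : L2) : IsRed [a] := List.isChain_singleton a

lemma mem_WkFin {k : ℕ} (hk : 1 ≤ k) (u : List L2) :
    u ∈ WkFin k ↔ IsRed u ∧ u.length = k := by
  simp only [WkFin, Finset.mem_biUnion, Finset.mem_univ, true_and]
  constructor
  · rintro ⟨a, ha⟩
    obtain ⟨hred, hlen, _⟩ := (mem_ext (isRed_singleton a) _ u).mp ha
    exact ⟨hred, by simp at hlen; omega⟩
  · rintro ⟨hred, hlen⟩
    have hlen2 : (u.drop (k - 1)).length = 1 := by rw [List.length_drop]; omega
    obtain ⟨a, ha⟩ := List.length_eq_one_iff.mp hlen2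
    exact ⟨a, (mem_ext (isRed_singleton a) _ u).mpr ⟨hred, by simp; omega, ha⟩⟩

lemma card_WkFin {k : ℕ} (hk : 1 ≤ k) : (WkFin k).card = 4 * 3 ^ (k - 1) := by
  rw [WkFin, Finset.card_biUnion]
  · rw [Finset.sum_congr rfl fun a _ => card_ext (isRed_singleton a) (by simp) (k - 1)]
    rw [Finset.sum_const]
    have : (Finset.univ : Finset L2).card = 4 := by simp
    rw [this]
    simp [mul_comm]
  · intro a _ b _ hab
    rw [Function.onFun, Finset.disjoint_left]
    intro y hy hy'
    obtain ⟨_, _, hda⟩ := (mem_ext (isRed_singleton a) _ y).mp hy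
    obtain ⟨_, _, hdb⟩ := (mem_ext (isRed_singleton b) _ y).mp hy'
    rw [hda] at hdb
    exact hab (by injection hdb)

def sfx (w : List L2) (m : ℕ) : List L2 := FreeGroup.invRev (w.take (m - m / 2))

def GFin (k : ℕ) (w : List L2) : Finset (List L2) :=
  (Finset.Icc 1 k).biUnion fun m => ext (sfx w m) (m / 2)

lemma isRed_sfx {w : List L2} (hw : IsRed w) (m : ℕ) : IsRed (sfx w m) :=
  isRed_invRev (hw.take _)

lemma length_sfx {w : List L2} {k m : ℕ} (hwk : w.length = k) (hm : m ≤ k) :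
    (sfx w m).length = m - m / 2 := by
  rw [sfx, FreeGroup.invRev_length, List.length_take]
  omega

lemma mem_GFin {w : List L2} {k : ℕ} (hw : IsRed w) (hwk : w.length = k) (u : List L2) :
    u ∈ GFin k w ↔ IsRed u ∧ 1 ≤ u.length ∧ u.length ≤ k ∧
      u.drop (u.length / 2) = sfx w u.length := by
  simp only [GFin, Finset.mem_biUnion, Finset.mem_Icc]
  constructor
  · rintro ⟨m, ⟨hm1, hmk⟩, hmem⟩
    obtain ⟨hred, hlen, hdrop⟩ := (mem_ext (isRed_sfx hw m) _ u).mp hmem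
    rw [length_sfx hwk hmk] at hlen
    have hul : u.length = m := by omega
    rw [hul]
    exact ⟨hred, by omega, by omega, by rw [show m / 2 = m / 2 from rfl] at hdrop; exact hdrop⟩
  · rintro ⟨hred, h1, h2, hdrop⟩
    refine ⟨u.length, ⟨h1, h2⟩, (mem_ext (isRed_sfx hw _) _ u).mpr
      ⟨hred, ?_, hdrop⟩⟩
    rw [length_sfx hwk h2]
    omega

lemma card_GFin {w : List L2} {k : ℕ} (hw : IsRed w) (hwk : w.length = k) (hk : 1 ≤ k) :
    (GFin k w).card = ∑ m ∈ Finset.Icc 1 k, 3 ^ (m / 2) := by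
  rw [GFin, Finset.card_biUnion]
  · refine Finset.sum_congr rfl fun m hm => ?_
    rw [Finset.mem_Icc] at hm
    refine card_ext (isRed_sfx hw m) ?_ _
    have : (sfx w m).length = m - m / 2 := length_sfx hwk hm.2
    intro hnil
    rw [hnil] at this
    simp at this
    omega
  · intro a ha b hb hab
    rw [Finset.mem_coe, Finset.mem_Icc] at ha hb
    rw [Function.onFun, Finset.disjoint_left]
    intro y hy hy'
    obtain ⟨_, hla, _⟩ := (mem_ext (isRed_sfx hw a) _ y).mp hy
    obtain ⟨_, hlb, _⟩ := (mem_ext (isRed_sfx hw b) _ y).mp hy'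
    rw [length_sfx hwk ha.2] at hla
    rw [length_sfx hwk hb.2] at hlb
    exact hab (by omega)

def F (k : ℕ) : Finset (FreeGroup (Fin 2) × FreeGroup (Fin 2)) :=
  (WkFin k).biUnion fun w => (GFin k w).image fun u => (FreeGroup.mk u, FreeGroup.mk w)

lemma mk_inj_isRed {u v : List L2} (hu : IsRed u) (hv : IsRed v)
    (h : FreeGroup.mk u = FreeGroup.mk v) : u = v := by
  have := FreeGroup.reduce.sound h
  rwa [reduce_eq_self hu, reduce_eq_self hv] at this

lemma card_F {k : ℕ} (hk : 1 ≤ k) :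
    (F k).card = 4 * 3 ^ (k - 1) * ∑ m ∈ Finset.Icc 1 k, 3 ^ (m / 2) := by
  rw [F, Finset.card_biUnion]
  · have h1 : ∀ w ∈ WkFin k,
        ((GFin k w).image fun u => (FreeGroup.mk u, FreeGroup.mk w)).card
          = ∑ m ∈ Finset.Icc 1 k, 3 ^ (m / 2) := by
      intro w hw
      obtain ⟨hwred, hwlen⟩ := (mem_WkFin hk w).mp hw
      rw [Finset.card_image_of_injOn, card_GFin hwred hwlen hk]
      intro a ha b hb hab
      obtain ⟨hared, _⟩ := (mem_GFin hwred hwlen a).mp ha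
      obtain ⟨hbred, _⟩ := (mem_GFin hwred hwlen b).mp hb
      exact mk_inj_isRed hared hbred (congrArg Prod.fst hab)
    rw [Finset.sum_congr rfl h1, Finset.sum_const, card_WkFin hk, smul_eq_mul]
  · intro a ha b hb hab
    obtain ⟨hared, halen⟩ := (mem_WkFin hk a).mp ha
    obtain ⟨hbred, hblen⟩ := (mem_WkFin hk b).mp hb
    rw [Function.onFun, Finset.disjoint_left]
    intro y hy hy'
    simp only [Finset.mem_image] at hy hy'
    obtain ⟨x, _, rfl⟩ := hy
    obtain ⟨x', _, heq⟩ := hy'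
    exact hab (mk_inj_isRed hared hbred (congrArg Prod.snd heq.symm))


lemma geom (M : ℕ) : 1 + 2 * ∑ j ∈ Finset.Icc 1 M, 3 ^ (j - 1) = 3 ^ M := by
  induction M with
  | zero => simp
  | succ M ih =>
    rw [Finset.sum_Icc_succ_top (by omega)]
    have : (1 : ℕ) + 2 * (∑ j ∈ Finset.Icc 1 M, 3 ^ (j - 1) + 3 ^ (M + 1 - 1))
        = (1 + 2 * ∑ j ∈ Finset.Icc 1 M, 3 ^ (j - 1)) + 2 * 3 ^ M := by
      simp; ring
    rw [this, ih, pow_succ]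
    ring

lemma arith {k : ℕ} (hk : 2 ≤ k) :
    ∑ m ∈ Finset.Icc 1 k, 3 ^ (m / 2)
      = 1 + ∑ i ∈ Finset.Icc 1 (k - 1),
          (1 + 2 * ∑ j ∈ Finset.Icc 1 (min i (k - i)), 3 ^ (j - 1)) := by
  have h1 : ∑ i ∈ Finset.Icc 1 (k - 1),
      (1 + 2 * ∑ j ∈ Finset.Icc 1 (min i (k - i)), 3 ^ (j - 1))
      = ∑ i ∈ Finset.Icc 1 (k - 1), 3 ^ (min i (k - i)) :=
    Finset.sum_congr rfl fun i _ => geom _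
  rw [h1]
  have h2 : Finset.Icc 1 k = insert 1 (Finset.Icc 2 k) := by
    ext x
    simp only [Finset.mem_Icc, Finset.mem_insert]
    omega
  rw [h2, Finset.sum_insert (by simp)]
  norm_num
  refine (Finset.sum_nbij' (i := fun i => if 2 * i ≤ k then 2 * i else 2 * (k - i) + 1)
    (j := fun m => if m % 2 = 0 then m / 2 else k - m / 2)
    ?_ ?_ ?_ ?_ ?_).symm
  · intro m hm
    rw [Finset.mem_Icc] at hm ⊢
    split_ifs <;> omega
  · intro i hi
    rw [Finset.mem_Icc] at hi ⊢
    split_ifs <;> omega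
  · intro m hm
    rw [Finset.mem_Icc] at hm
    split_ifs <;> omega
  · intro i hi
    rw [Finset.mem_Icc] at hi
    split_ifs <;> omega
  · intro m hm
    rw [Finset.mem_Icc] at hm
    split_ifs with h <;> (congr 1; omega)

end CountRelAux

open CountRelAux in
/-- In the free group on two generators, for `k ≥ 2` the number of pairs
`(γ, ψ)` with `ψ` of reduced length exactly `k`, `γ` nontrivial of reduced
length at most `k`, and `γψ` of reduced length at most `k`, equals
`4·3^(k-1)·r_k` with `r_k = 1 + Σ_{i=1}^{k-1}(1 + 2·Σ_{j=1}^{min(i,k-i)} 3^(j-1))`. -/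
theorem count_group_theoretical_relations (k : ℕ) (hk : 2 ≤ k) :
    Set.ncard {p : FreeGroup (Fin 2) × FreeGroup (Fin 2) |
        (FreeGroup.norm p.2 = k) ∧ p.1 ≠ 1 ∧ FreeGroup.norm p.1 ≤ k ∧
        FreeGroup.norm (p.1 * p.2) ≤ k}
      = 4 * 3 ^ (k - 1) *
        (1 + ∑ i ∈ Finset.Icc 1 (k - 1),
          (1 + 2 * ∑ j ∈ Finset.Icc 1 (min i (k - i)), 3 ^ (j - 1))) := by
  have hk1 : 1 ≤ k := by omega
  have hset : {p : FreeGroup (Fin 2) × FreeGroup (Fin 2) |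
        (FreeGroup.norm p.2 = k) ∧ p.1 ≠ 1 ∧ FreeGroup.norm p.1 ≤ k ∧
        FreeGroup.norm (p.1 * p.2) ≤ k} = ↑(F k) := by
    ext ⟨γ, ψ⟩
    simp only [Set.mem_setOf_eq, Finset.coe_sort_coe, Finset.mem_coe]
    constructor
    · rintro ⟨hψ, hγ1, hγk, hprod⟩
      have hwmem : ψ.toWord ∈ WkFin k := (mem_WkFin hk1 _).mpr ⟨isRed_toWord ψ, hψ⟩
      have hγlen : 1 ≤ γ.toWord.length :=
        List.length_pos_iff.mpr fun h => hγ1 (FreeGroup.toWord_eq_nil_iff.mp h)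
      have hsuffix : γ.toWord.drop (γ.toWord.length / 2)
          = sfx ψ.toWord γ.toWord.length := by
        have hle : γ.toWord.length ≤ ψ.toWord.length := by
          rw [show ψ.toWord.length = k from hψ]; exact hγk
        have := (norm_mul_le_iff (isRed_toWord γ) (isRed_toWord ψ) hγlen hle).mp
          (by rw [FreeGroup.mk_toWord, FreeGroup.mk_toWord,
                show ψ.toWord.length = k from hψ]; exact hprod)
        exact this
      have humem : γ.toWord ∈ GFin k ψ.toWord :=
        (mem_GFin (isRed_toWord ψ) hψ _).mpr ⟨isRed_toWord γ, hγlen, hγk, hsuffix⟩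
      refine Finset.mem_biUnion.mpr ⟨ψ.toWord, hwmem, Finset.mem_image.mpr
        ⟨γ.toWord, humem, ?_⟩⟩
      rw [FreeGroup.mk_toWord, FreeGroup.mk_toWord]
    · intro hmem
      obtain ⟨w, hw, hder⟩ := Finset.mem_biUnion.mp hmem
      obtain ⟨u, hu, heq⟩ := Finset.mem_image.mp hder
      obtain ⟨hwred, hwlen⟩ := (mem_WkFin hk1 w).mp hw
      obtain ⟨hured, hu1, huk, husuf⟩ := (mem_GFin hwred hwlen u).mp hu
      obtain ⟨rfl, rfl⟩ : FreeGroup.mk u = γ ∧ FreeGroup.mk w = ψ := by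
        rw [Prod.ext_iff] at heq; exact heq
      refine ⟨by rw [norm_mk_isRed hwred, hwlen], ?_, ?_, ?_⟩
      · intro h1
        have : FreeGroup.norm (FreeGroup.mk u) = 0 := by rw [h1]; simp
        rw [norm_mk_isRed hured] at this
        omega
      · rw [norm_mk_isRed hured]; exact huk
      · have := (norm_mul_le_iff hured hwred hu1 (by omega)).mpr husuf
        rwa [hwlen] at this
  rw [hset, Set.ncard_coe_finset, card_F hk1, arith hk]
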